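/- Let V be a finite set with |V| = n ≥ 1, and let y : V → V → Bool be a relation such that: (i) every vertex has at most one outgoing edge and at most one incoming edge (Σ_w y v w ≤ 1 and Σ_v y v w ≤ 1 for all v, w); (ii) for every nonempty subset V' ⊆ V, the number of edges with both endpoints in V' is at most |V'| − 1; and (iii) the total number of edges is n − 1. Then the directed graph defined by y is a simple directed path (Hamiltonian path) on V. -/

import Mathlib

open Finset

universe u

theorem aux_chain : ∀ (n : ℕ) (V : Type u) [Fintype V] [DecidableEq V],
    1 ≤ n → Fintype.card V = n → ∀ (y : V → V → Bool),
    (∀ v : V, (Finset.univ.filter (fun w => y v w = true)).card ≤ 1) →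
    (∀ w : V, (Finset.univ.filter (fun v => y v w = true)).card ≤ 1) →
    (∀ V' : Finset V, V'.Nonempty →
      (Finset.univ.filter (fun p : V × V => p.1 ∈ V' ∧ p.2 ∈ V' ∧ y p.1 p.2 = true)).card
        ≤ V'.card - 1) →
    ((Finset.univ.filter (fun p : V × V => y p.1 p.2 = true)).card = n - 1) →
    ∃ e : Fin n ≃ V, ∀ v w : V,
      y v w = true ↔ ∃ (i : Fin n) (h : i.val + 1 < n),
        e i = v ∧ e ⟨i.val + 1, h⟩ = w := by
  intro n
  induction n with
  | zero => intro V _ _ h; exact absurd h (by omega)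
  | succ m IH =>
    intro V instF instD _ hcard y hout hin hsub hedges
    -- no self loops
    have hself : ∀ v : V, ¬ (y v v = true) := by
      intro v hv
      have h1 := hsub {v} ⟨v, Finset.mem_singleton_self v⟩
      have h2 : (v, v) ∈ Finset.univ.filter
          (fun p : V × V => p.1 ∈ ({v} : Finset V) ∧ p.2 ∈ ({v} : Finset V)
            ∧ y p.1 p.2 = true) := by
        simp [hv]
      have h3 := Finset.card_pos.mpr ⟨_, h2⟩
      simp only [Finset.card_singleton] at h1
      omega
    have hyout : ∀ v w w' : V, y v w = true → y v w' = true → w = w' := by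
      intro v w w' h1 h2
      exact Finset.card_le_one.mp (hout v) w (by simp [h1]) w' (by simp [h2])
    have hyin : ∀ v v' w : V, y v w = true → y v' w = true → v = v' := by
      intro v v' w h1 h2
      exact Finset.card_le_one.mp (hin w) v (by simp [h1]) v' (by simp [h2])
    -- fiber count: edges = sum of in-degrees
    have hfib : (Finset.univ.filter (fun p : V × V => y p.1 p.2 = true)).card
        = ∑ w : V, (Finset.univ.filter (fun v => y v w = true)).card := by
      rw [Finset.card_eq_sum_card_fiberwise
        (f := Prod.snd) (t := Finset.univ) (fun _ _ => Finset.mem_univ _)]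
      refine Finset.sum_congr rfl fun w _ => ?_
      refine Finset.card_bij (fun p _ => p.1) ?_ ?_ ?_
      · intro p hp
        simp only [Finset.mem_filter, Finset.mem_univ, true_and] at hp ⊢
        rw [← hp.2]; exact hp.1
      · intro p hp q hq h
        simp only [Finset.mem_filter] at hp hq
        exact Prod.ext h (hp.2.trans hq.2.symm)
      · intro v hv
        simp only [Finset.mem_filter, Finset.mem_univ, true_and] at hv
        exact ⟨(v, w), by simp [hv], rfl⟩
    -- there is a vertex with in-degree 0
    have hs : ∃ s : V, ∀ v : V, ¬ (y v s = true) := by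
      by_contra hcon
      push_neg at hcon
      have h1 : ∀ w : V, 1 ≤ (Finset.univ.filter (fun v => y v w = true)).card := by
        intro w
        obtain ⟨v, hv⟩ := hcon w
        exact Finset.card_pos.mpr ⟨v, by simp [hv]⟩
      have h2 : (Fintype.card V : ℕ) ≤ ∑ w : V,
          (Finset.univ.filter (fun v => y v w = true)).card := by
        calc (Fintype.card V : ℕ) = ∑ _w : V, 1 := by simp
        _ ≤ _ := Finset.sum_le_sum fun w _ => h1 w
      rw [← hfib, hedges, hcard] at h2
      omega
    obtain ⟨s, hsin⟩ := hs
    rcases Nat.eq_zero_or_pos m with hm | hm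
    · -- base case n = 1
      subst hm
      have hy0 : ∀ v w : V, ¬ (y v w = true) := by
        intro v w hvw
        have h2 : (v, w) ∈ Finset.univ.filter (fun p : V × V => y p.1 p.2 = true) := by
          simp [hvw]
        have h3 := Finset.card_pos.mpr ⟨_, h2⟩
        omega
      refine ⟨(Fintype.equivFinOfCardEq hcard).symm, fun v w =>
        ⟨fun h => absurd h (hy0 v w), ?_⟩⟩
      rintro ⟨i, h, -, -⟩
      omega
    -- main case : m ≥ 1
    -- s has an outgoing edge
    have h3 : (Finset.univ.erase s).card = m := by
      rw [Finset.card_erase_of_mem (Finset.mem_univ s), Finset.card_univ, hcard]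
      omega
    have hst : ∃ t : V, y s t = true := by
      by_contra hcon
      push_neg at hcon
      have hsubset : (Finset.univ.filter (fun p : V × V => y p.1 p.2 = true)) ⊆
          Finset.univ.filter (fun p : V × V =>
            p.1 ∈ Finset.univ.erase s ∧ p.2 ∈ Finset.univ.erase s ∧ y p.1 p.2 = true) := by
        intro p hp
        simp only [Finset.mem_filter, Finset.mem_univ, true_and, Finset.mem_erase,
          and_true] at hp ⊢
        refine ⟨fun h1 => ?_, fun h2 => ?_, hp⟩
        · exact hcon p.2 (h1 ▸ hp)
        · exact hsin p.1 (h2 ▸ hp)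
      have hne : (Finset.univ.erase s).Nonempty := Finset.card_pos.mp (by rw [h3]; omega)
      have h1 := hsub _ hne
      have h2 := Finset.card_le_card hsubset
      rw [hedges] at h2
      rw [h3] at h1
      omega
    obtain ⟨t, hstt⟩ := hst
    have hts : t ≠ s := fun h => hself s (h ▸ hstt)
    -- subtype cardinality
    have hcard' : Fintype.card {v : V // v ≠ s} = m := by
      have hc := Fintype.card_subtype_compl (fun v => v = s)
      rw [Fintype.card_subtype_eq] at hc
      rw [hc, hcard]
      omega
    -- degree bounds on subtype
    have hout' : ∀ v : {v : V // v ≠ s},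
        (Finset.univ.filter (fun w : {v : V // v ≠ s} => y v.1 w.1 = true)).card ≤ 1 := by
      intro v
      refine le_trans (Finset.card_le_card_of_injOn (fun w => w.1) ?_ ?_) (hout v.1)
      · intro w hw
        simp only [Finset.mem_coe, Finset.mem_filter, Finset.mem_univ, true_and] at hw ⊢
        exact hw
      · intro a _ b _ h; exact Subtype.ext h
    have hin' : ∀ w : {v : V // v ≠ s},
        (Finset.univ.filter (fun v : {v : V // v ≠ s} => y v.1 w.1 = true)).card ≤ 1 := by
      intro w
      refine le_trans (Finset.card_le_card_of_injOn (fun v => v.1) ?_ ?_) (hin w.1)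
      · intro v hv
        simp only [Finset.mem_coe, Finset.mem_filter, Finset.mem_univ, true_and] at hv ⊢
        exact hv
      · intro a _ b _ h; exact Subtype.ext h
    -- edge-set cardinality transfer between subtype and V
    have hedgecard : ∀ (S : Finset V), s ∉ S →
        (Finset.univ.filter (fun p : {v : V // v ≠ s} × {v : V // v ≠ s} =>
            p.1.1 ∈ S ∧ p.2.1 ∈ S ∧ y p.1.1 p.2.1 = true)).card
        = (Finset.univ.filter (fun p : V × V =>
            p.1 ∈ S ∧ p.2 ∈ S ∧ y p.1 p.2 = true)).card := by
      intro S hS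
      refine Finset.card_bij' (fun p _ => (p.1.1, p.2.1))
        (fun p hp => (⟨p.1, ne_of_mem_of_not_mem (Finset.mem_filter.mp hp).2.1 hS⟩,
                      ⟨p.2, ne_of_mem_of_not_mem (Finset.mem_filter.mp hp).2.2.1 hS⟩))
        ?_ ?_ ?_ ?_
      · intro p hp
        simp only [Finset.mem_filter, Finset.mem_univ, true_and] at hp ⊢
        exact hp
      · intro p hp
        simp only [Finset.mem_filter, Finset.mem_univ, true_and] at hp ⊢
        exact hp
      · intro p _; rfl
      · intro p _; rfl
    -- subtour constraint on subtype
    have hsub' : ∀ V'' : Finset {v : V // v ≠ s}, V''.Nonempty →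
        (Finset.univ.filter (fun p : {v : V // v ≠ s} × {v : V // v ≠ s} =>
            p.1 ∈ V'' ∧ p.2 ∈ V'' ∧ y p.1.1 p.2.1 = true)).card ≤ V''.card - 1 := by
      intro V'' hne
      have hsS : s ∉ V''.map (Function.Embedding.subtype _) := by
        simp only [Finset.mem_map, Function.Embedding.coe_subtype]
        rintro ⟨a, _, ha⟩
        exact a.2 ha
      have h1 : (Finset.univ.filter (fun p : {v : V // v ≠ s} × {v : V // v ≠ s} =>
            p.1 ∈ V'' ∧ p.2 ∈ V'' ∧ y p.1.1 p.2.1 = true))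
          = Finset.univ.filter (fun p : {v : V // v ≠ s} × {v : V // v ≠ s} =>
            p.1.1 ∈ V''.map (Function.Embedding.subtype _)
            ∧ p.2.1 ∈ V''.map (Function.Embedding.subtype _) ∧ y p.1.1 p.2.1 = true) := by
        refine Finset.filter_congr fun p _ => ?_
        simp only [Finset.mem_map, Function.Embedding.coe_subtype]
        constructor
        · rintro ⟨h1, h2, h3⟩; exact ⟨⟨p.1, h1, rfl⟩, ⟨p.2, h2, rfl⟩, h3⟩
        · rintro ⟨⟨a, ha, ha'⟩, ⟨b, hb, hb'⟩, h3⟩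
          refine ⟨?_, ?_, h3⟩
          · rwa [show p.1 = a from Subtype.ext ha'.symm]
          · rwa [show p.2 = b from Subtype.ext hb'.symm]
      rw [h1, hedgecard _ hsS]
      have h2 := hsub (V''.map (Function.Embedding.subtype _)) hne.map
      rwa [Finset.card_map] at h2
    -- edge count on subtype
    have hins : Finset.univ.filter (fun p : V × V => y p.1 p.2 = true)
        = insert (s, t) (Finset.univ.filter (fun p : V × V =>
            p.1 ∈ Finset.univ.erase s ∧ p.2 ∈ Finset.univ.erase s ∧ y p.1 p.2 = true)) := by
      ext p
      simp only [Finset.mem_filter, Finset.mem_univ, true_and, Finset.mem_insert,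
        Finset.mem_erase, and_true]
      constructor
      · intro hp
        by_cases h1 : p.1 = s
        · left
          rw [Prod.ext_iff]
          exact ⟨h1, hyout s p.2 t (h1 ▸ hp) hstt⟩
        · right
          exact ⟨h1, fun h2 => hsin p.1 (h2 ▸ hp), hp⟩
      · rintro (h | ⟨-, -, h⟩)
        · rw [h]; exact hstt
        · exact h
    have hstnot : (s, t) ∉ Finset.univ.filter (fun p : V × V =>
        p.1 ∈ Finset.univ.erase s ∧ p.2 ∈ Finset.univ.erase s ∧ y p.1 p.2 = true) := by
      simp
    have hcnt : (Finset.univ.filter (fun p : V × V =>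
        p.1 ∈ Finset.univ.erase s ∧ p.2 ∈ Finset.univ.erase s ∧ y p.1 p.2 = true)).card
          = m - 1 := by
      rw [hins, Finset.card_insert_of_notMem hstnot] at hedges
      omega
    have hedges' : (Finset.univ.filter (fun p : {v : V // v ≠ s} × {v : V // v ≠ s} =>
        y p.1.1 p.2.1 = true)).card = m - 1 := by
      have h1 : (Finset.univ.filter (fun p : {v : V // v ≠ s} × {v : V // v ≠ s} =>
            y p.1.1 p.2.1 = true))
          = Finset.univ.filter (fun p : {v : V // v ≠ s} × {v : V // v ≠ s} =>
            p.1.1 ∈ Finset.univ.erase s ∧ p.2.1 ∈ Finset.univ.erase s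
              ∧ y p.1.1 p.2.1 = true) := by
        refine Finset.filter_congr fun p _ => ?_
        simp [Finset.mem_erase, p.1.2, p.2.2]
      rw [h1, hedgecard _ (Finset.notMem_erase s _)]
      exact hcnt
    -- apply induction hypothesis
    obtain ⟨e', he'⟩ := IH {v : V // v ≠ s} hm hcard' (fun a b => y a.1 b.1)
      hout' hin' hsub' hedges'
    -- e' 0 must be t
    have he0 : e' ⟨0, hm⟩ = ⟨t, hts⟩ := by
      by_contra h0
      have hjv : e' (e'.symm ⟨t, hts⟩) = ⟨t, hts⟩ := e'.apply_symm_apply _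
      have hjne : e'.symm ⟨t, hts⟩ ≠ ⟨0, hm⟩ := by
        intro h; rw [h] at hjv; exact h0 hjv
      have hpos : 0 < (e'.symm ⟨t, hts⟩).val :=
        Nat.pos_of_ne_zero (fun h => hjne (Fin.ext h))
      have hklt : ((e'.symm ⟨t, hts⟩).val - 1) + 1 < m := by
        have := (e'.symm ⟨t, hts⟩).isLt; omega
      have hedge := (he' (e' ⟨(e'.symm ⟨t, hts⟩).val - 1, by omega⟩)
          (e' ⟨((e'.symm ⟨t, hts⟩).val - 1) + 1, hklt⟩)).mpr
        ⟨⟨(e'.symm ⟨t, hts⟩).val - 1, by omega⟩, hklt, rfl, rfl⟩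
      have hidx : (⟨((e'.symm ⟨t, hts⟩).val - 1) + 1, hklt⟩ : Fin m) = e'.symm ⟨t, hts⟩ :=
        Fin.ext (by show ((e'.symm ⟨t, hts⟩).val - 1) + 1 = (e'.symm ⟨t, hts⟩).val; omega)
      rw [hidx, hjv] at hedge
      exact (e' ⟨(e'.symm ⟨t, hts⟩).val - 1, by omega⟩).2
        (hyin _ s t hedge hstt)
    -- construct the equivalence on Fin (m+1)
    have hlt : ∀ i : Fin (m + 1), ¬ i.val = 0 → i.val - 1 < m := by
      intro i h; have := i.isLt; omega
    set F : Fin (m + 1) → V :=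
      fun i => if h : i.val = 0 then s else (e' ⟨i.val - 1, hlt i h⟩).1 with hFdef
    set G : V → Fin (m + 1) :=
      fun v => if h : v = s then ⟨0, Nat.succ_pos m⟩
        else ⟨(e'.symm ⟨v, h⟩).val + 1, Nat.succ_lt_succ (e'.symm ⟨v, h⟩).isLt⟩ with hGdef
    have hF0 : ∀ (i : Fin (m + 1)), i.val = 0 → F i = s := by
      intro i h; rw [hFdef]; exact dif_pos h
    have hFs : ∀ (i : Fin (m + 1)) (h : ¬ i.val = 0),
        F i = (e' ⟨i.val - 1, hlt i h⟩).1 := by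
      intro i h; rw [hFdef]; exact dif_neg h
    have hFval : ∀ (k : ℕ) (hk : k < m) (h2 : k + 1 < m + 1),
        F ⟨k + 1, h2⟩ = (e' ⟨k, hk⟩).1 := by
      intro k hk h2
      rw [hFs ⟨k + 1, h2⟩ (Nat.succ_ne_zero k)]
      exact congrArg (fun j => (e' j).1) (Fin.ext rfl)
    have hGF : ∀ i : Fin (m + 1), G (F i) = i := by
      intro i
      by_cases h : i.val = 0
      · rw [hF0 i h, hGdef]
        simp only [dif_pos]
        exact Fin.ext (by simpa using h.symm)
      · rw [hFs i h, hGdef]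
        have hne : (e' ⟨i.val - 1, hlt i h⟩).1 ≠ s := (e' _).2
        simp only [dif_neg hne]
        have he : (⟨(e' ⟨i.val - 1, hlt i h⟩).1, hne⟩ : {v : V // v ≠ s})
            = e' ⟨i.val - 1, hlt i h⟩ := rfl
        rw [he, Equiv.symm_apply_apply]
        exact Fin.ext (by show i.val - 1 + 1 = i.val; omega)
    have hFG : ∀ v : V, F (G v) = v := by
      intro v
      by_cases h : v = s
      · subst h
        rw [hGdef]; simp only [dif_pos]
        exact hF0 _ rfl
      · rw [hGdef]; simp only [dif_neg h]
        rw [hFval (e'.symm ⟨v, h⟩).val (e'.symm ⟨v, h⟩).isLt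
          (Nat.succ_lt_succ (e'.symm ⟨v, h⟩).isLt)]
        have he : (⟨(e'.symm ⟨v, h⟩).val, (e'.symm ⟨v, h⟩).isLt⟩ : Fin m)
            = e'.symm ⟨v, h⟩ := rfl
        rw [he, Equiv.apply_symm_apply]
    refine ⟨⟨F, G, hGF, hFG⟩, fun v w => ?_⟩
    simp only [Equiv.coe_fn_mk]
    constructor
    · intro hvw
      by_cases hv : v = s
      · have hwt : w = t := hyout s w t (hv ▸ hvw) hstt
        refine ⟨⟨0, Nat.succ_pos m⟩, by show 0 + 1 < m + 1; omega,
          (hF0 _ rfl).trans hv.symm, ?_⟩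
        exact (hFval 0 hm (by omega)).trans
          ((congrArg Subtype.val he0).trans hwt.symm)
      · have hw : w ≠ s := fun hws => hsin v (hws ▸ hvw)
        obtain ⟨i, hilt, hiv, hiw⟩ := (he' ⟨v, hv⟩ ⟨w, hw⟩).mp hvw
        refine ⟨⟨i.val + 1, by have := i.isLt; omega⟩,
          by show i.val + 1 + 1 < m + 1; omega, ?_, ?_⟩
        · exact (hFval i.val i.isLt (Nat.succ_lt_succ i.isLt)).trans
            (congrArg Subtype.val hiv)
        · exact (hFval (i.val + 1) hilt (Nat.succ_lt_succ hilt)).trans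
            (congrArg Subtype.val hiw)
    · rintro ⟨i, hlt2, rfl, rfl⟩
      by_cases h : i.val = 0
      · rw [hF0 i h]
        have hi0 : i.val < m := by omega
        have h1 := hFval i.val hi0 hlt2
        have h2 : (⟨i.val, hi0⟩ : Fin m) = ⟨0, hm⟩ := Fin.ext h
        rw [h1, h2, he0]
        exact hstt
      · have hk : i.val - 1 < m := hlt i h
        have hi0 : i.val < m := by omega
        rw [hFs i h, hFval i.val hi0 hlt2]
        refine (he' _ _).mpr ⟨⟨i.val - 1, hk⟩, by show i.val - 1 + 1 < m; omega, rfl, ?_⟩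
        exact congrArg e' (Fin.ext (by show i.val - 1 + 1 = i.val; omega))

/-- Degree bounds, subtour-elimination and edge count n−1 force a Hamiltonian
directed path on V. -/
theorem chain_constraints_give_hamiltonian_path
    {V : Type*} [Fintype V] [DecidableEq V] (n : ℕ)
    (hn : 1 ≤ n) (hcard : Fintype.card V = n) (y : V → V → Bool)
    (hout : ∀ v : V, (Finset.univ.filter (fun w => y v w = true)).card ≤ 1)
    (hin : ∀ w : V, (Finset.univ.filter (fun v => y v w = true)).card ≤ 1)
    (hsub : ∀ V' : Finset V, V'.Nonempty →
      (Finset.univ.filter (fun p : V × V => p.1 ∈ V' ∧ p.2 ∈ V' ∧ y p.1 p.2 = true)).card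
        ≤ V'.card - 1)
    (hedges : (Finset.univ.filter (fun p : V × V => y p.1 p.2 = true)).card = n - 1) :
    ∃ e : Fin n ≃ V, ∀ v w : V,
      y v w = true ↔ ∃ (i : Fin n) (h : i.val + 1 < n),
        e i = v ∧ e ⟨i.val + 1, h⟩ = w := by
  exact aux_chain n V hn hcard y hout hin hsub hedges
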